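/- arXiv:2511.06263 — 4 statements merged into one kernel-verified Lean document; each statement's English description precedes it below -/
import Mathlib

section
/- Let k be a positive integer and define functions q, S on positive reals by: q(1) = 1, S(n,1) = n, and for t > 1, q(t) = 1 + q(t - t^{1-1/k}) and S(n,t) = n + S(n - t^{1-1/k}, t - t^{1-1/k}). Then (whenever the recursions are well-founded along a decreasing sequence t₀ = t > t₁ > ... > t_m = 1 with t_{j+1} = t_j - t_j^{1-1/k} and corresponding n_j) it holds that S(n,t) ≤ (n - t)·q(t) + t^{1+1/k}. -/
lemma key_step (k : ℕ) (hk : 1 ≤ k) (t : ℝ) (ht : 1 < t) :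
    (t - t ^ (1 - 1 / (k : ℝ))) ^ (1 + 1 / (k : ℝ)) ≤ t ^ (1 + 1 / (k : ℝ)) - t := by
  set c : ℝ := 1 / (k : ℝ) with hc
  have hcpos : 0 < c := by
    have : (0:ℝ) < (k:ℝ) := by exact_mod_cast hk.trans_lt' (by norm_num)
    positivity
  have htpos : 0 < t := by linarith
  have hx1 : t ^ (-c) < 1 := by
    have := Real.rpow_lt_one_of_one_lt_of_neg ht (by linarith : -c < 0)
    simpa using this
  have hxpos : 0 < t ^ (-c) := Real.rpow_pos_of_pos htpos _
  have hsplit : t - t ^ (1 - c) = t * (1 - t ^ (-c)) := by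
    have : t ^ (1 - c) = t * t ^ (-c) := by
      rw [show (1 : ℝ) - c = 1 + (-c) by ring, Real.rpow_add htpos, Real.rpow_one]
    rw [this]; ring
  rw [hsplit, Real.mul_rpow htpos.le (by linarith)]
  have hxle : (1 - t ^ (-c)) ^ (1 + c) ≤ 1 - t ^ (-c) := by
    rcases eq_or_lt_of_le (by linarith : (0:ℝ) ≤ 1 - t ^ (-c)) with h | h
    · rw [← h, Real.zero_rpow (by positivity)]
    · calc (1 - t ^ (-c)) ^ (1 + c) ≤ (1 - t ^ (-c)) ^ (1:ℝ) :=
            Real.rpow_le_rpow_of_exponent_ge h (by linarith) (by linarith)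
        _ = 1 - t ^ (-c) := Real.rpow_one _
  calc t ^ (1 + c) * (1 - t ^ (-c)) ^ (1 + c)
      ≤ t ^ (1 + c) * (1 - t ^ (-c)) := by
        exact mul_le_mul_of_nonneg_left hxle (Real.rpow_nonneg htpos.le _)
    _ = t ^ (1 + c) - t := by
        have : t ^ (1 + c) * t ^ (-c) = t := by
          rw [← Real.rpow_add htpos]; norm_num
        nlinarith [this]

theorem size_recursion_bound (k : ℕ) (hk : 1 ≤ k) (m : ℕ) (t n q S : ℕ → ℝ)
    (htm : t m = 1) (hqm : q m = 1) (hSm : S m = n m)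
    (hstep : ∀ j < m, 1 < t j ∧
      t (j + 1) = t j - t j ^ (1 - 1 / (k : ℝ)) ∧
      n (j + 1) = n j - t j ^ (1 - 1 / (k : ℝ)) ∧
      q j = 1 + q (j + 1) ∧
      S j = n j + S (j + 1))
    (hnt : ∀ j ≤ m, t j ≤ n j) (ht1 : ∀ j ≤ m, 1 ≤ t j) :
    S 0 ≤ (n 0 - t 0) * q 0 + t 0 ^ (1 + 1 / (k : ℝ)) := by
  have key : ∀ d j, j + d = m → S j ≤ (n j - t j) * q j + t j ^ (1 + 1 / (k : ℝ)) := by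
    intro d
    induction d with
    | zero =>
      intro j hj
      simp only [Nat.add_zero] at hj
      subst hj
      rw [htm, hqm, hSm, Real.one_rpow]
      ring_nf
      exact le_refl _
    | succ d ih =>
      intro j hj
      have hjm : j < m := by omega
      obtain ⟨ht, htr, hnr, hqr, hSr⟩ := hstep j hjm
      have hIH := ih (j + 1) (by omega)
      have hkey := key_step k hk (t j) ht
      have heq : n (j+1) - t (j+1) = n j - t j := by rw [htr, hnr]; ring
      rw [hSr, hqr]
      have ht' : t (j+1) ^ (1 + 1/(k:ℝ)) ≤ t j ^ (1 + 1/(k:ℝ)) - t j := by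
        rw [htr]; exact hkey
      rw [heq] at hIH
      nlinarith [hIH, ht']
  exact key m 0 (by omega)
end

section
/- Let (X,d) be a finite metric space, α ≥ 1, and Y a nonempty subset of X equipped with an ultrametric ρ satisfying d(x,y) ≤ ρ(x,y) ≤ α·d(x,y) for all x,y ∈ Y. For each x ∈ X let s(x) ∈ Y be a point of Y minimizing d(x, ·). Define T to be the graph on X consisting of a tree on Y realizing distances d_T with d(u,v) ≤ d_T(u,v) ≤ 8α·d(u,v) on Y, together with an edge from each x ∈ X∖Y to s(x) of weight d(x, s(x)). Then for all u, v ∈ X: d(u,v) ≤ d_T(u,v), and if u ∈ Y then d_T(u,v) ≤ (16α + 1)·d(u,v). -/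
/-- extending a tree metric on a Ramsey subset `Y` to all of `X`
by attaching each `x ∉ Y` to its nearest point `s x ∈ Y`. -/
theorem tree_extension_stretch
    {X : Type*} [MetricSpace X] [Fintype X]
    (Y : Set X) (hY : Y.Nonempty) (α : ℝ) (hα : 1 ≤ α)
    (ρ : X → X → ℝ)
    (hρ_ultra : ∀ x ∈ Y, ∀ y ∈ Y, ∀ z ∈ Y, ρ x z ≤ max (ρ x y) (ρ y z))
    (hρ_lb : ∀ x ∈ Y, ∀ y ∈ Y, dist x y ≤ ρ x y)
    (hρ_ub : ∀ x ∈ Y, ∀ y ∈ Y, ρ x y ≤ α * dist x y)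
    (s : X → X)
    (hs_mem : ∀ x, s x ∈ Y)
    (hs_min : ∀ x, ∀ y ∈ Y, dist x (s x) ≤ dist x y)
    (dT0 : X → X → ℝ)
    (hT0_lb : ∀ u ∈ Y, ∀ v ∈ Y, dist u v ≤ dT0 u v)
    (hT0_ub : ∀ u ∈ Y, ∀ v ∈ Y, dT0 u v ≤ 8 * α * dist u v)
    (σ : X → X)
    (hσ_in : ∀ x ∈ Y, σ x = x) (hσ_out : ∀ x ∉ Y, σ x = s x)
    (dT : X → X → ℝ)
    (hdT : ∀ u v, dT u v = dist u (σ u) + dT0 (σ u) (σ v) + dist (σ v) v) :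
    ∀ u v : X, dist u v ≤ dT u v ∧ (u ∈ Y → dT u v ≤ (16 * α + 1) * dist u v) := by
  have hσY : ∀ x, σ x ∈ Y := by
    intro x
    by_cases hx : x ∈ Y
    · rw [hσ_in x hx]; exact hx
    · rw [hσ_out x hx]; exact hs_mem x
  intro u v
  have hσv_le : u ∈ Y → dist v (σ v) ≤ dist v u := by
    intro hu
    by_cases hv : v ∈ Y
    · rw [hσ_in v hv]; simpa using dist_nonneg
    · rw [hσ_out v hv]; exact hs_min v u hu
  constructor
  · rw [hdT]
    have h1 : dist (σ u) (σ v) ≤ dT0 (σ u) (σ v) := hT0_lb _ (hσY u) _ (hσY v)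
    have h2 : dist u v ≤ dist u (σ u) + dist (σ u) (σ v) + dist (σ v) v :=
      dist_triangle4 u (σ u) (σ v) v
    linarith
  · intro hu
    rw [hdT, hσ_in u hu]
    have hsv : dist v (σ v) ≤ dist v u := hσv_le hu
    have h1 : dT0 u (σ v) ≤ 8 * α * dist u (σ v) := hT0_ub _ hu _ (hσY v)
    have h2 : dist u (σ v) ≤ dist u v + dist v (σ v) := dist_triangle u v (σ v)
    have h3 : dist v u = dist u v := dist_comm v u
    have h4 : dist (σ v) v = dist v (σ v) := dist_comm _ _
    have h5 : (0:ℝ) ≤ dist u (σ v) := dist_nonneg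
    have hα0 : (0:ℝ) ≤ 8 * α := by linarith
    have : 8 * α * dist u (σ v) ≤ 8 * α * (2 * dist u v) := by
      apply mul_le_mul_of_nonneg_left _ hα0
      linarith
    simp only [dist_self, zero_add]
    linarith
end

section
/- Let (X,d) be a metric space, S ⊆ X, k ≥ 1 a real, and ρ an ultrametric on S with d(a,b) ≤ ρ(a,b) ≤ (8k−2)·d(a,b) for all a,b ∈ S. Suppose u, v ∈ X and z ∈ S lies on a geodesic between u and v (d(u,z)+d(z,v)=d(u,v)), and let s_u, s_v ∈ S minimize d(u,·) and d(v,·) over S. Define D̂ = d(u,s_u) + ρ(s_u,s_v) + d(s_v,v). Then d(u,v) ≤ D̂ ≤ (16k−3)·d(u,v). -/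
theorem pairwise_oracle_stretch
    {X : Type*} [MetricSpace X] (S : Set X) (k : ℝ) (hk : 1 ≤ k)
    (ρ : X → X → ℝ)
    (hρ_ultra : ∀ a ∈ S, ∀ b ∈ S, ∀ c ∈ S, ρ a c ≤ max (ρ a b) (ρ b c))
    (hρ_lb : ∀ a ∈ S, ∀ b ∈ S, dist a b ≤ ρ a b)
    (hρ_ub : ∀ a ∈ S, ∀ b ∈ S, ρ a b ≤ (8 * k - 2) * dist a b)
    (u v z : X) (hz : z ∈ S) (hgeo : dist u z + dist z v = dist u v)
    (su sv : X) (hsu : su ∈ S) (hsv : sv ∈ S)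
    (hsu_min : ∀ y ∈ S, dist u su ≤ dist u y)
    (hsv_min : ∀ y ∈ S, dist v sv ≤ dist v y) :
    dist u v ≤ dist u su + ρ su sv + dist sv v ∧
      dist u su + ρ su sv + dist sv v ≤ (16 * k - 3) * dist u v := by
  have h1 : dist u su ≤ dist u z := hsu_min z hz
  have h2 : dist v sv ≤ dist v z := hsv_min z hz
  have htri : dist u v ≤ dist u su + dist su sv + dist sv v := dist_triangle4 u su sv v
  have hlb := hρ_lb su hsu sv hsv
  have hub := hρ_ub su hsu sv hsv
  have hsusv : dist su sv ≤ 2 * dist u v := by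
    have := dist_triangle4 su u v sv
    have h3 : dist su u = dist u su := dist_comm su u
    have h4 : dist v sv = dist sv v := dist_comm v sv
    have h5 : dist z v = dist v z := dist_comm z v
    have h6 : dist sv v ≤ dist v z := by rw [← h4]; exact h2
    linarith
  have hdnn : (0:ℝ) ≤ dist u v := dist_nonneg
  constructor
  · linarith
  · have : ρ su sv ≤ (8 * k - 2) * (2 * dist u v) := by
      have hkpos : (0:ℝ) ≤ 8 * k - 2 := by linarith
      calc ρ su sv ≤ (8 * k - 2) * dist su sv := hub
        _ ≤ (8 * k - 2) * (2 * dist u v) := by nlinarith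
    have h5 : dist z v = dist v z := dist_comm z v
    have h4 : dist sv v = dist v sv := dist_comm sv v
    linarith
end

section
/- Let k ≥ 1 be a real number and suppose a tree metric d_T on a set S satisfies d ≤ d_T ≤ (64k − 16)·d on S (obtained by applying an 8-approximation to an ultrametric with distortion 8k − 2). Extend T by attaching each x ∉ S to its nearest point s_x ∈ S with an edge of weight d(x, s_x). Then for every u ∈ S and every v in the extended vertex set, d_T(u,v) ≤ (64k−16)·(d(u,v) + d(v,s_v)) + d(s_v,v) ≤ (128k − 31)·d(u,v). -/
/-- extending a `(64k-16)`-approximate tree metric on `S` by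
attaching each point to its nearest point of `S` gives stretch `128k - 31`. -/
theorem extended_tree_stretch
    {X : Type*} [MetricSpace X] [Fintype X]
    (S : Set X) (k : ℝ) (hk : 1 ≤ k)
    (dT0 : X → X → ℝ)
    (hT0_lb : ∀ a ∈ S, ∀ b ∈ S, dist a b ≤ dT0 a b)
    (hT0_ub : ∀ a ∈ S, ∀ b ∈ S, dT0 a b ≤ (64 * k - 16) * dist a b)
    (s : X → X)
    (hs_mem : ∀ v, s v ∈ S)
    (hs_min : ∀ v, ∀ y ∈ S, dist v (s v) ≤ dist v y)
    (dT : X → X → ℝ)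
    (hdT : ∀ u ∈ S, ∀ v : X, dT u v = dT0 u (s v) + dist (s v) v) :
    ∀ u ∈ S, ∀ v : X,
      dT u v ≤ (64 * k - 16) * (dist u v + dist v (s v)) + dist (s v) v ∧
        dT u v ≤ (128 * k - 31) * dist u v := by
  intro u hu v
  have hk' : (0:ℝ) ≤ 64 * k - 16 := by linarith
  have h1 : dist u (s v) ≤ dist u v + dist v (s v) := dist_triangle u v (s v)
  have h2 : dist v (s v) ≤ dist v u := hs_min v u hu
  have h3 : dT0 u (s v) ≤ (64 * k - 16) * dist u (s v) :=
    hT0_ub u hu (s v) (hs_mem v)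
  have hlhs : dT u v ≤ (64 * k - 16) * (dist u v + dist v (s v)) + dist (s v) v := by
    rw [hdT u hu v]
    have := mul_le_mul_of_nonneg_left h1 hk'
    linarith
  refine ⟨hlhs, ?_⟩
  have h4 : dist (s v) v = dist v (s v) := dist_comm _ _
  have h5 : dist v u = dist u v := dist_comm _ _
  nlinarith [hlhs]
end
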